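/- Let P0, P1 be symmetric positive definite, A = (1/2) P0^{1/2} log(P0^{-1/2} P1 P0^{-1/2}) P0^{-1/2}, and P_t = exp(At) P0 exp(A't). Then dP_t/dt = A P_t + P_t A' for all t, P_0 = P0, and P_1 = P1. -/

import Mathlib

open Matrix

/-- The symmetric positive definite square root of a positive definite matrix. -/
noncomputable def sqrtm {n : ℕ} {P : Matrix (Fin n) (Fin n) ℝ} (hP : P.PosDef) :
    Matrix (Fin n) (Fin n) ℝ :=
  (hP.isHermitian.eigenvectorUnitary : Matrix (Fin n) (Fin n) ℝ) *
    diagonal ((↑) ∘ (√·) ∘ hP.isHermitian.eigenvalues) *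
    (star hP.isHermitian.eigenvectorUnitary : Matrix (Fin n) (Fin n) ℝ)

/-- Squared Frobenius norm of a real matrix. -/
noncomputable def frobSq {n : ℕ} (M : Matrix (Fin n) (Fin n) ℝ) : ℝ := (M * Mᵀ).trace

section aux
attribute [local instance] Matrix.linftyOpNormedRing Matrix.linftyOpNormedAlgebra

lemma entry_deriv_aux {n : ℕ} (A B : Matrix (Fin n) (Fin n) ℝ) (P0 : Matrix (Fin n) (Fin n) ℝ)
    (t : ℝ) (i j : Fin n) :
    HasDerivAt (fun s : ℝ => (NormedSpace.exp (s • A) * P0 * NormedSpace.exp (s • B)) i j)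
      ((A * (NormedSpace.exp (t • A) * P0 * NormedSpace.exp (t • B)) +
        (NormedSpace.exp (t • A) * P0 * NormedSpace.exp (t • B)) * B) i j) t := by
  have h1 := hasDerivAt_exp_smul_const' (𝕂 := ℝ) A t
  have h2 := hasDerivAt_exp_smul_const (𝕂 := ℝ) B t
  have h3 := (h1.mul_const P0).mul h2
  have h4 : HasDerivAt (fun s : ℝ => NormedSpace.exp (s • A) * P0 * NormedSpace.exp (s • B))
      (A * (NormedSpace.exp (t • A) * P0 * NormedSpace.exp (t • B)) +
        (NormedSpace.exp (t • A) * P0 * NormedSpace.exp (t • B)) * B) t := by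
    exact h3.congr_deriv (by noncomm_ring)
  let e : Matrix (Fin n) (Fin n) ℝ →ₗ[ℝ] ℝ :=
    (LinearMap.proj j).comp (LinearMap.proj (R := ℝ) (φ := fun _ : Fin n => Fin n → ℝ) i)
  have he : Continuous e := e.continuous_of_finiteDimensional
  exact (ContinuousLinearMap.hasFDerivAt ⟨e, he⟩).comp_hasDerivAt t h4

end aux

theorem stmt_8 {n : ℕ} {P0 P1 : Matrix (Fin n) (Fin n) ℝ}
    (hP0 : P0.PosDef) (hP1 : P1.PosDef)
    (L : Matrix (Fin n) (Fin n) ℝ) (hL : L.IsSymm)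
    (hexpL : NormedSpace.exp L = (sqrtm hP0)⁻¹ * P1 * (sqrtm hP0)⁻¹)
    (A : Matrix (Fin n) (Fin n) ℝ)
    (hA : A = (1 / 2 : ℝ) • (sqrtm hP0 * L * (sqrtm hP0)⁻¹))
    (P : ℝ → Matrix (Fin n) (Fin n) ℝ)
    (hP : ∀ t : ℝ, P t = NormedSpace.exp (t • A) * P0 * NormedSpace.exp (t • Aᵀ)) :
    (∀ (t : ℝ) (i j : Fin n),
        HasDerivAt (fun s : ℝ => P s i j) ((A * P t + P t * Aᵀ) i j) t) ∧
    P 0 = P0 ∧ P 1 = P1 := by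
  set S := sqrtm hP0 with hS
  have hUU : (star hP0.isHermitian.eigenvectorUnitary : Matrix (Fin n) (Fin n) ℝ) *
      (hP0.isHermitian.eigenvectorUnitary : Matrix (Fin n) (Fin n) ℝ) = 1 :=
    Unitary.coe_star_mul_self _
  have hSS : S * S = P0 := by
    conv_rhs => rw [hP0.isHermitian.spectral_theorem, Unitary.conjStarAlgAut_apply]
    rw [hS, sqrtm]
    calc _ = (hP0.isHermitian.eigenvectorUnitary : Matrix (Fin n) (Fin n) ℝ) *
          (diagonal ((↑) ∘ (√·) ∘ hP0.isHermitian.eigenvalues) *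
          ((star hP0.isHermitian.eigenvectorUnitary : Matrix (Fin n) (Fin n) ℝ) *
          (hP0.isHermitian.eigenvectorUnitary : Matrix (Fin n) (Fin n) ℝ)) *
          diagonal ((↑) ∘ (√·) ∘ hP0.isHermitian.eigenvalues)) *
          (star hP0.isHermitian.eigenvectorUnitary : Matrix (Fin n) (Fin n) ℝ) := by
            simp only [Matrix.mul_assoc]
      _ = _ := by
        rw [hUU, Matrix.mul_one, diagonal_mul_diagonal]
        congr 2
        simp [Real.mul_self_sqrt (hP0.posSemidef.eigenvalues_nonneg _)]
  have hSsymm : Sᵀ = S := by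
    rw [hS, sqrtm]
    simp [Matrix.transpose_mul, Matrix.star_eq_conjTranspose, Matrix.mul_assoc]
  have hSdet : IsUnit S.det := by
    have h : S.det * S.det = P0.det := by rw [← Matrix.det_mul, hSS]
    have := hP0.det_pos
    refine isUnit_iff_ne_zero.mpr fun h0 => ?_
    rw [h0, mul_zero] at h
    exact this.ne' h.symm
  have hSunit : IsUnit S := (Matrix.isUnit_iff_isUnit_det S).mpr hSdet
  have hSinv : S * S⁻¹ = 1 := Matrix.mul_nonsing_inv S hSdet
  have hSinv' : S⁻¹ * S = 1 := Matrix.nonsing_inv_mul S hSdet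
  -- exp of A
  have hAeq : A = S * ((1/2 : ℝ) • L) * S⁻¹ := by
    rw [hA]; simp [Matrix.mul_smul, Matrix.smul_mul]
  have hexpA : NormedSpace.exp A = S * NormedSpace.exp ((1/2 : ℝ) • L) * S⁻¹ := by
    rw [hAeq]; exact Matrix.exp_conj S _ hSunit
  set E := NormedSpace.exp ((1/2 : ℝ) • L) with hE
  have hEsymm : Eᵀ = E := by
    rw [hE, ← Matrix.exp_transpose]
    congr 1
    rw [Matrix.transpose_smul, hL.eq]
  have hexpAT : NormedSpace.exp Aᵀ = S⁻¹ * E * S := by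
    rw [Matrix.exp_transpose, hexpA]
    rw [Matrix.transpose_mul, Matrix.transpose_mul, hEsymm, hSsymm,
      Matrix.transpose_nonsing_inv, hSsymm]
    noncomm_ring
  have hEE : E * E = NormedSpace.exp L := by
    rw [hE, ← Matrix.exp_add_of_commute _ _ (((Commute.refl L).smul_left _).smul_right _)]
    congr 1
    rw [← add_smul]; norm_num
  refine ⟨?_, ?_, ?_⟩
  · intro t i j
    rw [hP t]
    have h := entry_deriv_aux A Aᵀ P0 t i j
    have hfun : (fun s : ℝ => P s i j)
        = fun s : ℝ => (NormedSpace.exp (s • A) * P0 * NormedSpace.exp (s • Aᵀ)) i j := by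
      funext s; rw [hP s]
    rw [hfun]
    exact h
  · rw [hP 0]; simp [NormedSpace.exp_zero]
  · rw [hP 1]
    simp only [one_smul]
    rw [hexpA, hexpAT]
    have : S * E * S⁻¹ * P0 * (S⁻¹ * E * S) = S * E * (S⁻¹ * P0 * S⁻¹) * E * S := by
      noncomm_ring
    rw [this]
    have hmid : S⁻¹ * P0 * S⁻¹ = 1 := by
      rw [← hSS]
      calc S⁻¹ * (S * S) * S⁻¹ = (S⁻¹ * S) * (S * S⁻¹) := by noncomm_ring
        _ = 1 := by rw [hSinv, hSinv', one_mul]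
    rw [hmid, Matrix.mul_one]
    have : S * E * E * S = S * (E * E) * S := by noncomm_ring
    rw [this, hEE, hexpL]
    calc S * (S⁻¹ * P1 * S⁻¹) * S = (S * S⁻¹) * P1 * (S⁻¹ * S) := by noncomm_ring
      _ = P1 := by rw [hSinv, hSinv']; simp
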